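/- Let T be a Marco–Martens map on the probability space (X, ℬ, m) with Marco–Martens cover {X_j}_{j≥0}, let l_B be a Banach limit, and let μ be the set function defined by μ(A) := Σ_{j=0}^∞ l_B((m_n(A ∩ Y_j))_{n≥1}) for measurable A ⊆ X. Then for every j ≥ 0 with μ(Y_j) > 0 (which forces m(Y_j) > 0) and every measurable set A ⊆ Y_j, one has K_j⁻¹·(μ(Y_j)/m(Y_j))·m(A) ≤ μ(A) ≤ K_j·(μ(Y_j)/m(Y_j))·m(A), where K_j is the constant from condition (4) of the Marco–Martens cover. -/

import Mathlib

open MeasureTheory Set Filter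

/-- `MMY Xs j = Y_j := X_j \ ⋃_{i < j} X_i`. -/
def MMY {X : Type*} (Xs : ℕ → Set X) (j : ℕ) : Set X := Xs j \ ⋃ i ∈ Set.Iio j, Xs i

/-- `T` is a Marco–Martens map on the probability space `(X, ℬ, m)` with Marco–Martens cover
`(X_j)_{j ≥ 0}` and constants `(K_j)_{j ≥ 0}` (condition (4)): `T` is measurable, maps
measurable sets to measurable sets, `m` is quasi-invariant under `T`, and conditions
(2)–(6) of the definition hold. -/
structure MarcoMartens {X : Type*} [MeasurableSpace X] (m : Measure X) (T : X → X)
    (Xs : ℕ → Set X) (K : ℕ → ℝ) : Prop where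
  measurable_T : Measurable T
  image_meas : ∀ A : Set X, MeasurableSet A → MeasurableSet (T '' A)
  quasi_invariant : m.map T ≪ m
  meas_Xs : ∀ j, MeasurableSet (Xs j)
  cover : m (univ \ ⋃ n, Xs n) = 0
  cond3 : ∀ i j : ℕ, ∃ k : ℕ, 0 < m (Xs i ∩ T^[k] ⁻¹' Xs j)
  one_le_K : ∀ j, 1 ≤ K j
  cond4 : ∀ j : ℕ, ∀ A B : Set X, MeasurableSet A → MeasurableSet B →
    A ⊆ Xs j → B ⊆ Xs j → ∀ n : ℕ,
    m (T^[n] ⁻¹' A) * m B ≤ ENNReal.ofReal (K j) * (m A * m (T^[n] ⁻¹' B))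
  cond5 : ∑' n : ℕ, m (T^[n] ⁻¹' Xs 0) = ⊤
  cond6 : Tendsto (fun l : ℕ => m (T '' ⋃ j ∈ Set.Ici l, MMY Xs j)) atTop (nhds 0)

/-- `mseq m T Xs A n = m_n(A) := (Σ_{k=0}^n m(T^{-k}A)) / (Σ_{k=0}^n m(T^{-k}X_0))`. -/
noncomputable def mseq {X : Type*} [MeasurableSpace X] (m : Measure X) (T : X → X)
    (Xs : ℕ → Set X) (A : Set X) (n : ℕ) : ℝ :=
  (∑ k ∈ Finset.range (n + 1), (m (T^[k] ⁻¹' A)).toReal) /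
    (∑ k ∈ Finset.range (n + 1), (m (T^[k] ⁻¹' Xs 0)).toReal)

/-- `lB` is a Banach limit: a positive, normalized, shift-invariant linear functional on the
space of bounded real sequences. -/
structure IsBanachLimit (lB : (ℕ → ℝ) → ℝ) : Prop where
  map_add : ∀ x y : ℕ → ℝ, (∃ C, ∀ n, |x n| ≤ C) → (∃ C, ∀ n, |y n| ≤ C) →
    lB (x + y) = lB x + lB y
  map_smul : ∀ (c : ℝ) (x : ℕ → ℝ), (∃ C, ∀ n, |x n| ≤ C) → lB (c • x) = c * lB x
  nonneg : ∀ x : ℕ → ℝ, (∃ C, ∀ n, |x n| ≤ C) → (∀ n, 0 ≤ x n) → 0 ≤ lB x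
  map_one : lB (fun _ => 1) = 1
  shift_invariant : ∀ x : ℕ → ℝ, (∃ C, ∀ n, |x n| ≤ C) → lB (fun n => x (n + 1)) = lB x

/-- `MMmu m T Xs lB A = μ(A) := Σ_{j=0}^∞ lB((m_n(A ∩ Y_j))_{n ≥ 1})`. -/
noncomputable def MMmu {X : Type*} [MeasurableSpace X] (m : Measure X) (T : X → X)
    (Xs : ℕ → Set X) (lB : (ℕ → ℝ) → ℝ) (A : Set X) : ℝ :=
  ∑' j : ℕ, lB (fun n => mseq m T Xs (A ∩ MMY Xs j) (n + 1))

section MMAux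

variable {X : Type*} [MeasurableSpace X] {m : Measure X} [IsProbabilityMeasure m]
  {T : X → X} {Xs : ℕ → Set X} {K : ℕ → ℝ} {lB : (ℕ → ℝ) → ℝ}

private lemma MM.iter_null (hMM : MarcoMartens m T Xs K) {S : Set X} (hS : MeasurableSet S)
    (h0 : m S = 0) : ∀ k, m (T^[k] ⁻¹' S) = 0 := by
  intro k
  induction k with
  | zero => simpa using h0
  | succ k ih =>
    have hmeas : MeasurableSet (T^[k] ⁻¹' S) := hS.preimage (hMM.measurable_T.iterate k)
    have h1 : m.map T (T^[k] ⁻¹' S) = 0 := hMM.quasi_invariant ih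
    rw [Measure.map_apply hMM.measurable_T hmeas] at h1
    rw [Function.iterate_succ, Set.preimage_comp]
    exact h1

private lemma MM.mX0_pos (hMM : MarcoMartens m T Xs K) : 0 < m (Xs 0) := by
  rcases eq_zero_or_pos (m (Xs 0)) with h | h
  · have hz := MM.iter_null hMM (hMM.meas_Xs 0) h
    have h5 := hMM.cond5
    simp [hz] at h5
  · exact h

private lemma MM.den_pos (hMM : MarcoMartens m T Xs K) (n : ℕ) :
    0 < ∑ k ∈ Finset.range (n + 1), (m (T^[k] ⁻¹' Xs 0)).toReal := by
  have h0 : 0 < (m (Xs 0)).toReal :=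
    ENNReal.toReal_pos (MM.mX0_pos hMM).ne' (measure_ne_top m _)
  calc (0:ℝ) < (m (Xs 0)).toReal := h0
    _ = (m (T^[0] ⁻¹' Xs 0)).toReal := by simp
    _ ≤ ∑ k ∈ Finset.range (n + 1), (m (T^[k] ⁻¹' Xs 0)).toReal :=
        Finset.single_le_sum (f := fun k => (m (T^[k] ⁻¹' Xs 0)).toReal)
          (fun _ _ => ENNReal.toReal_nonneg) (Finset.mem_range.mpr (Nat.succ_pos n))

private lemma MM.mseq_nonneg (A : Set X) (n : ℕ) : 0 ≤ mseq m T Xs A n := by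
  unfold mseq
  apply div_nonneg <;> exact Finset.sum_nonneg (fun _ _ => ENNReal.toReal_nonneg)

private lemma MM.mseq_comp (hMM : MarcoMartens m T Xs K) (j : ℕ) {A B : Set X}
    (hA : MeasurableSet A) (hB : MeasurableSet B)
    (hAs : A ⊆ Xs j) (hBs : B ⊆ Xs j) (n : ℕ) :
    mseq m T Xs A n * (m B).toReal ≤ K j * ((m A).toReal * mseq m T Xs B n) := by
  have hK0 : (0:ℝ) ≤ K j := le_trans zero_le_one (hMM.one_le_K j)
  have key : ∀ k : ℕ, (m (T^[k] ⁻¹' A)).toReal * (m B).toReal ≤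
      K j * ((m A).toReal * (m (T^[k] ⁻¹' B)).toReal) := by
    intro k
    have h := hMM.cond4 j A B hA hB hAs hBs k
    have hfin2 : ENNReal.ofReal (K j) * (m A * m (T^[k] ⁻¹' B)) ≠ ⊤ :=
      ENNReal.mul_ne_top ENNReal.ofReal_ne_top
        (ENNReal.mul_ne_top (measure_ne_top m _) (measure_ne_top m _))
    have h2 := (ENNReal.toReal_le_toReal
      (ENNReal.mul_ne_top (measure_ne_top m _) (measure_ne_top m _)) hfin2).mpr h
    simpa [ENNReal.toReal_mul, ENNReal.toReal_ofReal hK0] using h2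
  have hsum : (∑ k ∈ Finset.range (n + 1), (m (T^[k] ⁻¹' A)).toReal) * (m B).toReal ≤
      K j * ((m A).toReal * ∑ k ∈ Finset.range (n + 1), (m (T^[k] ⁻¹' B)).toReal) := by
    rw [Finset.sum_mul, Finset.mul_sum, Finset.mul_sum]
    exact Finset.sum_le_sum (fun k _ => key k)
  have hD := MM.den_pos hMM n
  unfold mseq
  rw [div_mul_eq_mul_div, ← mul_div_assoc, ← mul_div_assoc]
  exact (div_le_div_iff_of_pos_right hD).mpr hsum

private lemma MM.mseq_bound (hMM : MarcoMartens m T Xs K) (j : ℕ) {A : Set X}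
    (hA : MeasurableSet A) (hAs : A ⊆ Xs j) :
    ∃ C : ℝ, ∀ n, |mseq m T Xs A n| ≤ C := by
  obtain ⟨i, hi⟩ := hMM.cond3 j 0
  set B : Set X := Xs j ∩ T^[i] ⁻¹' Xs 0 with hBdef
  have hBmeas : MeasurableSet B :=
    (hMM.meas_Xs j).inter ((hMM.meas_Xs 0).preimage (hMM.measurable_T.iterate i))
  have hb : (0:ℝ) < (m B).toReal := ENNReal.toReal_pos hi.ne' (measure_ne_top m _)
  have hx0 : (0:ℝ) < (m (Xs 0)).toReal :=
    ENNReal.toReal_pos (MM.mX0_pos hMM).ne' (measure_ne_top m _)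
  have hK0 : (0:ℝ) < K j := lt_of_lt_of_le zero_lt_one (hMM.one_le_K j)
  set b := (m B).toReal with hbdef
  set x0 := (m (Xs 0)).toReal with hx0def
  refine ⟨K j / b * (1 + (i:ℝ) / x0), fun n => ?_⟩
  rw [abs_of_nonneg (MM.mseq_nonneg A n)]
  set t : ℕ → ℝ := fun k => (m (T^[k] ⁻¹' Xs 0)).toReal with htdef
  have ht0 : ∀ k, 0 ≤ t k := fun k => ENNReal.toReal_nonneg
  have ht1 : ∀ k, t k ≤ 1 := fun k => by
    have := prob_le_one (μ := m) (s := T^[k] ⁻¹' Xs 0)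
    simpa [htdef] using ENNReal.toReal_mono ENNReal.one_ne_top this
  set D := ∑ k ∈ Finset.range (n + 1), t k with hDdef
  have hD : 0 < D := MM.den_pos hMM n
  have hx0D : x0 ≤ D := by
    calc x0 = t 0 := by simp [htdef, hx0def]
      _ ≤ D := Finset.single_le_sum (f := t) (fun k _ => ht0 k)
          (Finset.mem_range.mpr (Nat.succ_pos n))
  set num := ∑ k ∈ Finset.range (n + 1), (m (T^[k] ⁻¹' A)).toReal with hnumdef
  have hnum0 : 0 ≤ num := Finset.sum_nonneg (fun _ _ => ENNReal.toReal_nonneg)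
  have hmA1 : (m A).toReal ≤ 1 := by
    simpa using ENNReal.toReal_mono ENNReal.one_ne_top (prob_le_one (μ := m) (s := A))
  have key : ∀ k : ℕ, (m (T^[k] ⁻¹' A)).toReal * b ≤ K j * t (i + k) := by
    intro k
    have h := hMM.cond4 j A B hA hBmeas hAs Set.inter_subset_left k
    have hfin2 : ENNReal.ofReal (K j) * (m A * m (T^[k] ⁻¹' B)) ≠ ⊤ :=
      ENNReal.mul_ne_top ENNReal.ofReal_ne_top
        (ENNReal.mul_ne_top (measure_ne_top m _) (measure_ne_top m _))
    have h2 := (ENNReal.toReal_le_toReal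
      (ENNReal.mul_ne_top (measure_ne_top m _) (measure_ne_top m _)) hfin2).mpr h
    rw [ENNReal.toReal_mul, ENNReal.toReal_mul, ENNReal.toReal_mul,
      ENNReal.toReal_ofReal hK0.le, ← hbdef] at h2
    have hBsub : m (T^[k] ⁻¹' B) ≤ m (T^[i + k] ⁻¹' Xs 0) := by
      rw [Function.iterate_add, Set.preimage_comp]
      exact measure_mono (Set.preimage_mono Set.inter_subset_right)
    have hBsub' : (m (T^[k] ⁻¹' B)).toReal ≤ t (i + k) :=
      ENNReal.toReal_mono (measure_ne_top m _) hBsub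
    calc (m (T^[k] ⁻¹' A)).toReal * b ≤ K j * ((m A).toReal * (m (T^[k] ⁻¹' B)).toReal) := h2
      _ ≤ K j * (1 * t (i + k)) := by
          apply mul_le_mul_of_nonneg_left _ hK0.le
          exact mul_le_mul hmA1 hBsub' ENNReal.toReal_nonneg zero_le_one
      _ = K j * t (i + k) := by ring
  have hnumb : num * b ≤ K j * (D + i) := by
    have h1 : num * b ≤ K j * ∑ k ∈ Finset.range (n + 1), t (i + k) := by
      rw [Finset.sum_mul, Finset.mul_sum]
      exact Finset.sum_le_sum (fun k _ => key k)
    have h2 : ∑ k ∈ Finset.range (n + 1), t (i + k) ≤ ∑ k ∈ Finset.range (i + (n + 1)), t k := by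
      rw [Finset.sum_range_add t i (n + 1)]
      have : 0 ≤ ∑ k ∈ Finset.range i, t k := Finset.sum_nonneg (fun k _ => ht0 k)
      linarith
    have h3 : ∑ k ∈ Finset.range (i + (n + 1)), t k ≤ D + i := by
      rw [add_comm i (n + 1), Finset.sum_range_add t (n + 1) i]
      have : ∑ k ∈ Finset.range i, t (n + 1 + k) ≤ ∑ _k ∈ Finset.range i, (1:ℝ) :=
        Finset.sum_le_sum (fun k _ => ht1 _)
      simp only [Finset.sum_const, Finset.card_range, nsmul_eq_mul, mul_one] at this
      rw [← hDdef]
      linarith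
    calc num * b ≤ K j * ∑ k ∈ Finset.range (n + 1), t (i + k) := h1
      _ ≤ K j * (D + i) := by
          apply mul_le_mul_of_nonneg_left _ hK0.le
          exact h2.trans h3
  show num / D ≤ K j / b * (1 + (i:ℝ) / x0)
  rw [div_le_iff₀ hD]
  have hEq : K j / b * (1 + (i:ℝ) / x0) * D = K j * ((x0 + i) * D) / (b * x0) := by
    field_simp
  rw [hEq, le_div_iff₀ (by positivity)]
  nlinarith [mul_le_mul_of_nonneg_right hnumb hx0.le,
    mul_le_mul_of_nonneg_left hx0D (mul_nonneg hK0.le (Nat.cast_nonneg i))]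

private lemma MM.MMY_disj {i j : ℕ} (hij : i ≠ j) (Xs : ℕ → Set X) :
    MMY Xs i ∩ MMY Xs j = ∅ := by
  have key : ∀ a b : ℕ, a < b → MMY Xs a ∩ MMY Xs b = ∅ := by
    intro a b hab
    rw [Set.eq_empty_iff_forall_notMem]
    rintro x ⟨⟨hxa, -⟩, ⟨-, hxn⟩⟩
    exact hxn (Set.mem_biUnion hab hxa)
  rcases hij.lt_or_gt with h | h
  · exact key i j h
  · rw [Set.inter_comm]; exact key j i h

private lemma MM.lB_zero (hlB : IsBanachLimit lB) : lB (fun _ => (0:ℝ)) = 0 := by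
  have h := hlB.map_smul 0 (fun _ => (0:ℝ)) ⟨0, by simp⟩
  have h2 : (0:ℝ) • (fun _ : ℕ => (0:ℝ)) = fun _ : ℕ => (0:ℝ) := by
    funext n; simp
  rw [h2, zero_mul] at h
  exact h

private lemma MM.mmu_eq (hlB : IsBanachLimit lB) (j : ℕ) {A : Set X}
    (hAs : A ⊆ MMY Xs j) :
    MMmu m T Xs lB A = lB (fun n => mseq m T Xs A (n + 1)) := by
  unfold MMmu
  rw [tsum_eq_single j]
  · rw [Set.inter_eq_left.mpr hAs]
  · intro i hij
    have hempty : A ∩ MMY Xs i = ∅ := by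
      rw [Set.eq_empty_iff_forall_notMem]
      rintro x ⟨hxA, hxi⟩
      have : x ∈ MMY Xs i ∩ MMY Xs j := ⟨hxi, hAs hxA⟩
      rw [MM.MMY_disj hij Xs] at this
      exact this
    have hfun : (fun n => mseq m T Xs (A ∩ MMY Xs i) (n + 1)) = fun _ : ℕ => (0:ℝ) := by
      funext n
      simp [hempty, mseq]
    rw [hfun]
    exact MM.lB_zero hlB

private lemma MM.lB_mono (hlB : IsBanachLimit lB) {x y : ℕ → ℝ}
    (hx : ∃ C, ∀ n, |x n| ≤ C) (hy : ∃ C, ∀ n, |y n| ≤ C)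
    (h : ∀ n, x n ≤ y n) : lB x ≤ lB y := by
  obtain ⟨Cx, hCx⟩ := hx
  obtain ⟨Cy, hCy⟩ := hy
  have hbd : ∃ C, ∀ n, |(y + (-1 : ℝ) • x) n| ≤ C := by
    refine ⟨Cy + Cx, fun n => ?_⟩
    simp only [Pi.add_apply, Pi.smul_apply, smul_eq_mul, neg_one_mul]
    calc |y n + -x n| ≤ |y n| + |(-x n)| := abs_add_le _ _
      _ = |y n| + |x n| := by rw [abs_neg]
      _ ≤ Cy + Cx := add_le_add (hCy n) (hCx n)
  have h1 : lB (y + (-1:ℝ) • x) = lB y + (-1) * lB x := by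
    rw [hlB.map_add y ((-1:ℝ) • x) ⟨Cy, hCy⟩
      ⟨Cx, fun n => by simpa using hCx n⟩, hlB.map_smul (-1) x ⟨Cx, hCx⟩]
  have h2 : 0 ≤ lB (y + (-1:ℝ) • x) := by
    apply hlB.nonneg _ hbd
    intro n
    simp only [Pi.add_apply, Pi.smul_apply, smul_eq_mul, neg_one_mul]
    linarith [h n]
  linarith

private lemma MM.smul_bdd {x : ℕ → ℝ} (c : ℝ) (hx : ∃ C, ∀ n, |x n| ≤ C) :
    ∃ C, ∀ n, |(c • x) n| ≤ C := by
  obtain ⟨C, hC⟩ := hx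
  refine ⟨|c| * C, fun n => ?_⟩
  simp only [Pi.smul_apply, smul_eq_mul, abs_mul]
  exact mul_le_mul_of_nonneg_left (hC n) (abs_nonneg c)

end MMAux

/-- For a Marco–Martens map with constants `K_j` (from condition (4)) and a Banach limit `lB`,
for every `j` with `μ(Y_j) > 0` (which forces `m(Y_j) > 0`) and every measurable `A ⊆ Y_j`:
`K_j⁻¹ (μ(Y_j)/m(Y_j)) m(A) ≤ μ(A) ≤ K_j (μ(Y_j)/m(Y_j)) m(A)`. -/
theorem stmt11 {X : Type*} [MeasurableSpace X] (m : Measure X) [IsProbabilityMeasure m]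
    (T : X → X) (Xs : ℕ → Set X) (K : ℕ → ℝ) (hMM : MarcoMartens m T Xs K)
    (lB : (ℕ → ℝ) → ℝ) (hlB : IsBanachLimit lB)
    (j : ℕ) (hpos : 0 < MMmu m T Xs lB (MMY Xs j)) :
    0 < (m (MMY Xs j)).toReal ∧
    ∀ A : Set X, MeasurableSet A → A ⊆ MMY Xs j →
      (K j)⁻¹ * (MMmu m T Xs lB (MMY Xs j) / (m (MMY Xs j)).toReal) * (m A).toReal ≤
          MMmu m T Xs lB A ∧
        MMmu m T Xs lB A ≤
          K j * (MMmu m T Xs lB (MMY Xs j) / (m (MMY Xs j)).toReal) * (m A).toReal := by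
  have hYmeas : MeasurableSet (MMY Xs j) :=
    (hMM.meas_Xs j).diff (MeasurableSet.biUnion (Set.to_countable _)
      (fun i _ => hMM.meas_Xs i))
  have hYsub : MMY Xs j ⊆ Xs j := Set.diff_subset
  set Yj := MMY Xs j with hYdef
  set bseq : ℕ → ℝ := fun n => mseq m T Xs Yj (n + 1) with hbseq
  have hmuY : MMmu m T Xs lB Yj = lB bseq := MM.mmu_eq hlB j Set.Subset.rfl
  have hmY : 0 < (m Yj).toReal := by
    rcases eq_zero_or_pos (m Yj) with h0 | h0
    · exfalso
      have hz := MM.iter_null hMM hYmeas h0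
      have hb0 : bseq = fun _ => (0:ℝ) := by
        funext n
        simp [hbseq, mseq, hz]
      rw [hmuY, hb0, MM.lB_zero hlB] at hpos
      exact lt_irrefl 0 hpos
    · exact ENNReal.toReal_pos h0.ne' (measure_ne_top m _)
  refine ⟨hmY, fun A hA hAsub => ?_⟩
  set aseq : ℕ → ℝ := fun n => mseq m T Xs A (n + 1) with haseq
  have hmuA : MMmu m T Xs lB A = lB aseq := MM.mmu_eq hlB j hAsub
  obtain ⟨Ca, hCa⟩ := MM.mseq_bound hMM j hA (hAsub.trans hYsub)
  obtain ⟨Cb, hCb⟩ := MM.mseq_bound hMM j hYmeas hYsub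
  have haB : ∃ C, ∀ n, |aseq n| ≤ C := ⟨Ca, fun n => hCa (n + 1)⟩
  have hbB : ∃ C, ∀ n, |bseq n| ≤ C := ⟨Cb, fun n => hCb (n + 1)⟩
  set mY := (m Yj).toReal with hmYdef
  set mA := (m A).toReal with hmAdef
  have hmAnn : 0 ≤ mA := ENNReal.toReal_nonneg
  have hK0 : (0:ℝ) < K j := lt_of_lt_of_le zero_lt_one (hMM.one_le_K j)
  have hup : lB aseq * mY ≤ K j * mA * lB bseq := by
    have hpt : ∀ n, (mY • aseq) n ≤ ((K j * mA) • bseq) n := by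
      intro n
      simp only [Pi.smul_apply, smul_eq_mul]
      have hc := MM.mseq_comp hMM j hA hYmeas (hAsub.trans hYsub) hYsub (n + 1)
      calc mY * aseq n = mseq m T Xs A (n + 1) * mY := by rw [haseq]; ring
        _ ≤ K j * (mA * mseq m T Xs Yj (n + 1)) := hc
        _ = K j * mA * bseq n := by rw [hbseq]; ring
    have hm := MM.lB_mono hlB (MM.smul_bdd mY haB) (MM.smul_bdd (K j * mA) hbB) hpt
    rw [hlB.map_smul mY aseq haB, hlB.map_smul (K j * mA) bseq hbB] at hm
    linarith
  have hlo : lB bseq * mA ≤ K j * mY * lB aseq := by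
    have hpt : ∀ n, (mA • bseq) n ≤ ((K j * mY) • aseq) n := by
      intro n
      simp only [Pi.smul_apply, smul_eq_mul]
      have hc := MM.mseq_comp hMM j hYmeas hA hYsub (hAsub.trans hYsub) (n + 1)
      calc mA * bseq n = mseq m T Xs Yj (n + 1) * mA := by rw [hbseq]; ring
        _ ≤ K j * (mY * mseq m T Xs A (n + 1)) := hc
        _ = K j * mY * aseq n := by rw [haseq]; ring
    have hm := MM.lB_mono hlB (MM.smul_bdd mA hbB) (MM.smul_bdd (K j * mY) haB) hpt
    rw [hlB.map_smul mA bseq hbB, hlB.map_smul (K j * mY) aseq haB] at hm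
    linarith
  rw [hmuA, hmuY]
  constructor
  · have hEq : (K j)⁻¹ * (lB bseq / mY) * mA = lB bseq * mA / (K j * mY) := by
      field_simp
      try ring
    rw [hEq, div_le_iff₀ (mul_pos hK0 hmY)]
    calc lB bseq * mA ≤ K j * mY * lB aseq := hlo
      _ = lB aseq * (K j * mY) := by ring
  · have hEq : K j * (lB bseq / mY) * mA = K j * lB bseq * mA / mY := by
      ring
    rw [hEq, le_div_iff₀ hmY]
    calc lB aseq * mY ≤ K j * mA * lB bseq := hup
      _ = K j * lB bseq * mA := by ring
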